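/- The sequence n ↦ p(n,n) (for n ≥ 2, viewed as a sequence of real numbers) does not converge as n → ∞. Specifically, along the subsequence n = 2^{k+1} one has p(2^{k+1}, 2^{k+1}) → 2/3 as k → ∞, while along the subsequence n = ⌈(4/3)·2^k⌉ one has p(⌈(4/3)·2^k⌉, ⌈(4/3)·2^k⌉) → 5/8 as k → ∞; hence there is no real number L with p(n,n) → L. -/

import Mathlib

open Filter

/-- `Kf n = ⌊log₂ (n-1)⌋`, so that for `n ≥ 2`, `2^(Kf n) < n ≤ 2^(Kf n + 1)`. -/
def Kf (n : ℕ) : ℕ := Nat.log 2 (n - 1)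

def Bq (b : ℕ) : ℚ := 2 ^ (Kf b + 1) * b - (4:ℚ)/3 * 4 ^ (Kf b) - 2/3

def Cq (n : ℕ) : ℚ := 2 ^ (Kf n) * n - (2:ℚ)/3 * 4 ^ (Kf n) - 4/3

/-- conjectured closed form for the value. -/
def Fq (n m : ℕ) : ℚ :=
  if n ≤ 1 then 1 else if m ≤ 1 then 0
  else if m ≤ 2 ^ Kf n then Bq m / (n * m) else 1 - Cq n / (n * m)

lemma Kf_lt (n : ℕ) (h : 2 ≤ n) : 2 ^ Kf n < n := by
  have := Nat.pow_log_le_self 2 (show n - 1 ≠ 0 by omega)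
  unfold Kf; omega

lemma le_Kf (n : ℕ) (h : 2 ≤ n) : n ≤ 2 ^ (Kf n + 1) := by
  have := Nat.lt_pow_succ_log_self (show 1 < 2 by norm_num) (n - 1)
  unfold Kf; omega

lemma four_pow (j : ℕ) : (4:ℚ) ^ j = 2 ^ j * 2 ^ j := by
  rw [show (4:ℚ) = 2 * 2 by norm_num, mul_pow]

/-- Master supporting-line lemma: `Bq b ≥ 2^j b - 4^j/3 - 2/3` for every `j`. -/
lemma master (j b : ℕ) (hb : 1 ≤ b) :
    (2:ℚ) ^ j * b - (4:ℚ) ^ j / 3 - 2/3 ≤ Bq b := by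
  unfold Bq
  set L := Kf b with hL
  rw [four_pow, four_pow, pow_succ]
  have hQpos : (0:ℚ) < 2 ^ L := by positivity
  have hPpos : (0:ℚ) < 2 ^ j := by positivity
  rcases eq_or_lt_of_le hb with h1 | h2
  · -- b = 1
    have hb1 : b = 1 := h1.symm
    subst hb1
    have : L = 0 := by simp [hL, Kf]
    rw [this]
    -- need: 2^j * 1 - 2^j*2^j/3 - 2/3 ≤ 2*1*1 - 4/3*(1*1) - 2/3
    rcases Nat.eq_zero_or_pos j with hj | hj
    · subst hj; norm_num
    · have : (2:ℚ) ≤ 2 ^ j := by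
        calc (2:ℚ) = 2^1 := by norm_num
        _ ≤ 2^j := by apply pow_le_pow_right₀ (by norm_num) hj
      push_cast
      nlinarith [this, hPpos]
  · -- b ≥ 2
    have hb2 : 2 ≤ b := h2
    have h1 : 2 ^ L < b := Kf_lt b hb2
    have h2' : b ≤ 2 ^ (L + 1) := le_Kf b hb2
    have hc1 : (2:ℚ) ^ L < b := by exact_mod_cast h1
    have hc2 : (b:ℚ) ≤ 2 * 2 ^ L := by
      have h2'' : b ≤ 2 * 2 ^ L := by rw [pow_succ] at h2'; omega
      exact_mod_cast h2''
    rcases lt_trichotomy j (L + 1) with hj | hj | hj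
    · -- j ≤ L so 2 * 2^j ≤ 2^(L+1) = 2*2^L, i.e. 2^j ≤ 2^L
      have : (2:ℚ) ^ j ≤ 2 ^ L := by
        have : 2 ^ j ≤ 2 ^ L := Nat.pow_le_pow_right (by norm_num) (by omega)
        exact_mod_cast this
      nlinarith [hc1, this, hQpos, hPpos]
    · subst hj; rw [pow_succ]; ring_nf; nlinarith [hQpos]
    · -- j ≥ L + 2, so 2^j ≥ 4 * 2^L
      have : (4:ℚ) * 2 ^ L ≤ 2 ^ j := by
        have : 2 ^ (L + 2) ≤ 2 ^ j := Nat.pow_le_pow_right (by norm_num) (by omega)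
        have h4 : (2:ℕ) ^ (L+2) = 4 * 2 ^ L := by ring
        rw [h4] at this
        exact_mod_cast this
      nlinarith [hc1, hc2, this, hQpos, hPpos]

/-- Equality case of the supporting line: if `b ≤ 2^j ≤ 2b` the line is exact. -/
lemma master_eq (j b : ℕ) (hb : 1 ≤ b) (h1 : b ≤ 2 ^ j) (h2 : 2 ^ j ≤ 2 * b) :
    Bq b = (2:ℚ) ^ j * b - (4:ℚ) ^ j / 3 - 2/3 := by
  unfold Bq
  set L := Kf b with hL
  rcases eq_or_lt_of_le hb with hb1 | hb2
  · have hb1 : b = 1 := hb1.symm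
    subst hb1
    have hL0 : L = 0 := by simp [hL, Kf]
    rw [hL0]
    have hj2 : j ≤ 1 := by
      by_contra hcon
      have : 2 ^ 2 ≤ 2 ^ j := Nat.pow_le_pow_right (by norm_num) (by omega)
      omega
    interval_cases j <;> norm_num
  · have hb2 : 2 ≤ b := hb2
    have e1 : 2 ^ L < b := Kf_lt b hb2
    have e2 : b ≤ 2 ^ (L + 1) := le_Kf b hb2
    -- from b ≤ 2^j and 2^L < b : L < j ; from 2^j ≤ 2b ≤ 2^(L+2) : j ≤ L+2
    have hj1 : L + 1 ≤ j := by
      by_contra hcon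
      have : 2 ^ j ≤ 2 ^ L := Nat.pow_le_pow_right (by norm_num) (by omega)
      omega
    have hj2 : j ≤ L + 2 := by
      by_contra hcon
      have : 2 ^ (L + 3) ≤ 2 ^ j := Nat.pow_le_pow_right (by norm_num) (by omega)
      have : 2 * 2 ^ (L + 1) < 2 ^ (L+3) := by ring_nf; omega
      omega
    rcases (by omega : j = L + 1 ∨ j = L + 2) with hj | hj
    · subst hj; rw [pow_succ (4:ℚ)]; ring_nf
    · subst hj
      have hbq : b = 2 ^ (L + 1) := by
        have : 2 ^ (L+2) = 2 * 2^(L+1) := by ring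
        omega
      have hbq' : (b:ℚ) = 2 ^ (L+1) := by exact_mod_cast hbq
      rw [hbq', four_pow, four_pow]
      ring

/-- `Rq m x = m * x * Fq m x` as a nicer expression. -/
def Rq (m x : ℕ) : ℚ := if x ≤ 2 ^ Kf m then Bq x else m * x - Cq m

lemma Bq_one : Bq 1 = 0 := by norm_num [Bq, Kf]

lemma Rq_eq (m x : ℕ) (hm : 2 ≤ m) (hx : 1 ≤ x) :
    Rq m x = (m : ℚ) * (x * Fq m x) := by
  unfold Rq Fq
  rw [if_neg (show ¬ m ≤ 1 by omega)]
  rcases eq_or_lt_of_le hx with h1 | h2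
  · have : x = 1 := h1.symm
    subst this
    rw [if_pos (Nat.one_le_two_pow), if_pos (le_refl 1), Bq_one]
    ring
  · have hx2 : 2 ≤ x := h2
    rw [if_neg (show ¬ x ≤ 1 by omega)]
    have hm0 : (m:ℚ) ≠ 0 := by positivity
    have hx0 : (x:ℚ) ≠ 0 := by positivity
    by_cases h : x ≤ 2 ^ Kf m
    · rw [if_pos h, if_pos h]; field_simp
    · rw [if_neg h, if_neg h]; field_simp

/-- target: `m * n * (1 - Fq n m)`. -/
def Tq (n m : ℕ) : ℚ := if m ≤ 2 ^ Kf n then m * n - Bq m else Cq n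

lemma B_eq_two_C (m : ℕ) : Bq m = 2 * Cq m + 2 := by
  unfold Bq Cq; rw [pow_succ]; ring

lemma Bq_pow (K : ℕ) : Bq (2 ^ K) = (2:ℚ)/3 * 4 ^ K - 2/3 := by
  have h := master_eq K (2 ^ K) (Nat.one_le_two_pow) (le_refl _) (by omega)
  rw [h, four_pow]
  push_cast
  ring

/-- `Cq n = Bq ⌊n/2⌋ + Bq ⌈n/2⌉`. -/
lemma C_split (n : ℕ) (hn : 2 ≤ n) : Cq n = Bq (n / 2) + Bq (n - n / 2) := by
  have hN1 : 2 ^ Kf n < n := Kf_lt n hn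
  have hN2 : n ≤ 2 * 2 ^ Kf n := by have := le_Kf n hn; rw [pow_succ] at this; omega
  set k := Kf n
  have hb : 1 ≤ n / 2 := by omega
  have hb1 : n / 2 ≤ 2 ^ k := by omega
  have hb2 : 2 ^ k ≤ 2 * (n / 2) := by omega
  have hc : 1 ≤ n - n / 2 := by omega
  have hc1 : n - n / 2 ≤ 2 ^ k := by omega
  have hc2 : 2 ^ k ≤ 2 * (n - n / 2) := by omega
  rw [master_eq k _ hb hb1 hb2, master_eq k _ hc hc1 hc2]
  have hcast : ((n - n / 2 : ℕ) : ℚ) = (n : ℚ) - ((n / 2 : ℕ) : ℚ) := by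
    have : n / 2 ≤ n := by omega
    push_cast [this]; ring
  unfold Cq
  rw [hcast]
  ring

lemma Bq_def' (m : ℕ) : Bq m = 2 * 2 ^ Kf m * (m:ℚ) - 4/3 * (2 ^ Kf m * 2 ^ Kf m) - 2/3 := by
  unfold Bq; rw [four_pow, pow_succ]; ring

lemma Cq_def' (n : ℕ) : Cq n = 2 ^ Kf n * (n:ℚ) - 2/3 * (2 ^ Kf n * 2 ^ Kf n) - 4/3 := by
  unfold Cq; rw [four_pow]

lemma master' (j b : ℕ) (hb : 1 ≤ b) :
    (2:ℚ) ^ j * b - 2 ^ j * 2 ^ j / 3 - 2/3 ≤ Bq b := by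
  have := master j b hb; rw [four_pow] at this; linarith

-- pure rational arithmetic cores
lemma caseA_both (N b c nq Bb Bc : ℚ) (m1 : N*b - N*N/3 - 2/3 ≤ Bb)
    (m2 : N*c - N*N/3 - 2/3 ≤ Bc) (hbc : b + c = nq) :
    N*nq - 2/3*(N*N) - 4/3 ≤ Bb + Bc := by
  have h : N*nq = N*b + N*c := by rw [← hbc]; ring
  linarith

lemma caseA_mix (N M mq b c nq Bb : ℚ) (m1 : N*b - N*N/3 - 2/3 ≤ Bb)
    (hbc : b + c = nq) (hm : N + 1 ≤ mq) (hc : M + 1 ≤ c) (hNM : N ≤ M) (hN0 : 0 ≤ N) :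
    N*nq - 2/3*(N*N) - 4/3 ≤ Bb + (mq*c - (M*mq - 2/3*(M*M) - 4/3)) := by
  have hnq : nq = b + c := hbc.symm
  subst hnq
  nlinarith [mul_nonneg (by linarith : (0:ℚ) ≤ mq - N - 1) (by linarith : (0:ℚ) ≤ c - M),
    mul_nonneg (by linarith : (0:ℚ) ≤ 2*M - N) (by linarith : (0:ℚ) ≤ M - N)]

lemma caseB_mix (M mq b c nq Bb : ℚ) (m1 : M*b - M*M/3 - 2/3 ≤ Bb)
    (hbc : b + c = nq) (hm : M + 1 ≤ mq) (hb : b ≤ M) :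
    mq*nq - (2*M*mq - 4/3*(M*M) - 2/3) ≤ Bb + (mq*c - (M*mq - 2/3*(M*M) - 4/3)) := by
  have hnq : nq = b + c := hbc.symm
  subst hnq
  nlinarith [mul_nonneg (by linarith : (0:ℚ) ≤ mq - M) (by linarith : (0:ℚ) ≤ M - b)]

lemma caseB_big (M mq b c nq : ℚ) (hbc : b + c = nq) :
    mq*nq - (2*M*mq - 4/3*(M*M) - 2/3) ≤
      (mq*b - (M*mq - 2/3*(M*M) - 4/3)) + (mq*c - (M*mq - 2/3*(M*M) - 4/3)) := by
  have h : mq*nq = mq*b + mq*c := by rw [← hbc]; ring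
  linarith

/-- Core upper bound: every split `b + c = n` has cost at least the target. -/
lemma core_ub (n m b : ℕ) (hn : 2 ≤ n) (hm : 2 ≤ m) (hb : 1 ≤ b) (hbn : b ≤ n - 1) :
    Tq n m ≤ Rq m b + Rq m (n - b) := by
  have hc1 : 1 ≤ n - b := by omega
  have hbc : b + (n - b) = n := by omega
  have hM1 : 2 ^ Kf m < m := Kf_lt m hm
  have hM2 : m ≤ 2 * 2 ^ Kf m := by have := le_Kf m hm; rw [pow_succ] at this; omega
  have hN1 : 2 ^ Kf n < n := Kf_lt n hn
  have hN2 : n ≤ 2 * 2 ^ Kf n := by have := le_Kf n hn; rw [pow_succ] at this; omega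
  have cM : ((2:ℚ) ^ Kf m) = ((2 ^ Kf m : ℕ) : ℚ) := by push_cast; ring
  have cN : ((2:ℚ) ^ Kf n) = ((2 ^ Kf n : ℕ) : ℚ) := by push_cast; ring
  have qM1 : (2:ℚ) ^ Kf m + 1 ≤ m := by
    rw [cM]; exact_mod_cast (show 2 ^ Kf m + 1 ≤ m by omega)
  have qbc : (b:ℚ) + ((n - b : ℕ) : ℚ) = n := by exact_mod_cast hbc
  unfold Tq Rq
  by_cases hA : m ≤ 2 ^ Kf n
  · -- Case B
    rw [if_pos hA]
    have hMN : 2 * 2 ^ Kf m ≤ 2 ^ Kf n := by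
      have hKk : Kf m + 1 ≤ Kf n := by
        by_contra hcon
        have : 2 ^ Kf n ≤ 2 ^ Kf m := Nat.pow_le_pow_right (by norm_num) (by omega)
        omega
      calc 2 * 2 ^ Kf m = 2 ^ (Kf m + 1) := by ring
      _ ≤ 2 ^ Kf n := Nat.pow_le_pow_right (by norm_num) hKk
    have hn2M : 2 * 2 ^ Kf m < n := by omega
    rw [Bq_def' m, Cq_def' m]
    by_cases h1 : b ≤ 2 ^ Kf m
    · rw [if_pos h1, if_neg (show ¬ n - b ≤ 2 ^ Kf m by omega)]
      have qb : (b:ℚ) ≤ 2 ^ Kf m := by rw [cM]; exact_mod_cast h1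
      exact caseB_mix _ _ _ _ _ _ (master' (Kf m) b hb) qbc qM1 qb
    · by_cases h2 : (n - b) ≤ 2 ^ Kf m
      · rw [if_neg h1, if_pos h2]
        have qc : ((n - b:ℕ):ℚ) ≤ 2 ^ Kf m := by rw [cM]; exact_mod_cast h2
        have := caseB_mix ((2:ℚ) ^ Kf m) m ((n-b:ℕ):ℚ) b n (Bq (n-b))
          (master' (Kf m) (n - b) hc1) (by linarith) qM1 qc
        linarith
      · rw [if_neg h1, if_neg h2]
        exact caseB_big _ _ _ _ _ qbc
  · -- Case A
    rw [if_neg hA, Cq_def' n]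
    have hNM : 2 ^ Kf n ≤ 2 ^ Kf m := by
      have : Kf n ≤ Kf m := by
        by_contra hcon
        have : 2 ^ (Kf m + 1) ≤ 2 ^ Kf n := Nat.pow_le_pow_right (by norm_num) (by omega)
        have h2K : 2 ^ (Kf m + 1) = 2 * 2 ^ Kf m := by ring
        omega
      exact Nat.pow_le_pow_right (by norm_num) this
    have qNM : (2:ℚ) ^ Kf n ≤ 2 ^ Kf m := by rw [cM, cN]; exact_mod_cast hNM
    have hn2M : n ≤ 2 * 2 ^ Kf m := by omega
    have qmA : (2:ℚ) ^ Kf n + 1 ≤ m := by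
      rw [cN]; exact_mod_cast (show 2 ^ Kf n + 1 ≤ m by omega)
    rw [Cq_def' m]
    by_cases h1 : b ≤ 2 ^ Kf m
    · by_cases h2 : (n - b) ≤ 2 ^ Kf m
      · rw [if_pos h1, if_pos h2]
        exact caseA_both _ _ _ _ _ _ (master' (Kf n) b hb) (master' (Kf n) (n-b) hc1) qbc
      · rw [if_pos h1, if_neg h2]
        have qc : (2:ℚ) ^ Kf m + 1 ≤ ((n - b : ℕ):ℚ) := by
          rw [cM]; exact_mod_cast (show 2 ^ Kf m + 1 ≤ n - b by omega)
        exact caseA_mix _ _ _ _ _ _ _ (master' (Kf n) b hb) qbc qmA qc qNM (by positivity)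
    · rw [if_neg h1, if_pos (show n - b ≤ 2 ^ Kf m by omega)]
      have qb : (2:ℚ) ^ Kf m + 1 ≤ (b:ℚ) := by
        rw [cM]; exact_mod_cast (show 2 ^ Kf m + 1 ≤ b by omega)
      have := caseA_mix ((2:ℚ) ^ Kf n) ((2:ℚ) ^ Kf m) m ((n-b:ℕ):ℚ) b n (Bq (n-b))
        (master' (Kf n) (n - b) hc1) (by linarith) qmA qb qNM (by positivity)
      linarith

/-- Core existence: some split achieves the target. -/
lemma core_ex (n m : ℕ) (hn : 2 ≤ n) (hm : 2 ≤ m) :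
    ∃ b, 1 ≤ b ∧ b ≤ n - 1 ∧ Rq m b + Rq m (n - b) = Tq n m := by
  have hM1 : 2 ^ Kf m < m := Kf_lt m hm
  have hM2 : m ≤ 2 * 2 ^ Kf m := by have := le_Kf m hm; rw [pow_succ] at this; omega
  have hN1 : 2 ^ Kf n < n := Kf_lt n hn
  have hN2 : n ≤ 2 * 2 ^ Kf n := by have := le_Kf n hn; rw [pow_succ] at this; omega
  by_cases hA : m ≤ 2 ^ Kf n
  · -- Case B : b = 2^(Kf m)
    have hMN : 2 * 2 ^ Kf m ≤ 2 ^ Kf n := by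
      have hKk : Kf m + 1 ≤ Kf n := by
        by_contra hcon
        have : 2 ^ Kf n ≤ 2 ^ Kf m := Nat.pow_le_pow_right (by norm_num) (by omega)
        omega
      calc 2 * 2 ^ Kf m = 2 ^ (Kf m + 1) := by ring
      _ ≤ 2 ^ Kf n := Nat.pow_le_pow_right (by norm_num) hKk
    refine ⟨2 ^ Kf m, Nat.one_le_two_pow, by omega, ?_⟩
    unfold Rq Tq
    rw [if_pos (le_refl _), if_neg (show ¬ n - 2 ^ Kf m ≤ 2 ^ Kf m by omega),
      if_pos hA]
    have hcast : ((n - 2 ^ Kf m : ℕ) : ℚ) = (n:ℚ) - 2 ^ Kf m := by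
      push_cast [show 2 ^ Kf m ≤ n by omega]; ring
    rw [hcast, Bq_pow, Bq_def' m, Cq_def' m, four_pow]
    ring
  · -- Case A : b = n / 2
    refine ⟨n / 2, by omega, by omega, ?_⟩
    have hNM : 2 ^ Kf n ≤ 2 ^ Kf m := by
      have : Kf n ≤ Kf m := by
        by_contra hcon
        have : 2 ^ (Kf m + 1) ≤ 2 ^ Kf n := Nat.pow_le_pow_right (by norm_num) (by omega)
        have h2K : 2 ^ (Kf m + 1) = 2 * 2 ^ Kf m := by ring
        omega
      exact Nat.pow_le_pow_right (by norm_num) this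
    unfold Rq Tq
    rw [if_pos (show n / 2 ≤ 2 ^ Kf m by omega),
      if_pos (show n - n / 2 ≤ 2 ^ Kf m by omega), if_neg hA]
    exact (C_split n hn).symm

lemma Fq_target (n m : ℕ) (hn : 2 ≤ n) (hm : 2 ≤ m) :
    Fq n m = 1 - Tq n m / (m * n) := by
  have h0 : ((m:ℚ) * n) ≠ 0 := by positivity
  unfold Fq Tq
  rw [if_neg (show ¬ n ≤ 1 by omega), if_neg (show ¬ m ≤ 1 by omega)]
  by_cases h : m ≤ 2 ^ Kf n
  · rw [if_pos h, if_pos h, sub_div, div_self h0, mul_comm (n:ℚ) (m:ℚ)]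
    ring
  · rw [if_neg h, if_neg h]; rw [mul_comm (m:ℚ) (n:ℚ)]

lemma bridge (n m b : ℕ) (hn : 2 ≤ n) (hm : 2 ≤ m) (hb : 1 ≤ b) (hbn : b ≤ n - 1) :
    1 - (b:ℚ)/(n:ℚ) * Fq m b - ((n - b : ℕ):ℚ)/(n:ℚ) * Fq m (n - b)
      = 1 - (Rq m b + Rq m (n - b)) / (m * n) := by
  rw [Rq_eq m b hm hb, Rq_eq m (n - b) hm (by omega)]
  have h0 : ((m:ℚ)) ≠ 0 := by positivity
  have h1 : ((n:ℚ)) ≠ 0 := by positivity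
  field_simp
  ring

/-- The closed form satisfies the recursion. -/
lemma Fq_rec (n m : ℕ) (hn : 2 ≤ n) (hm : 2 ≤ m) :
    Fq n m = (Finset.Icc 1 (n - 1)).sup' (Finset.nonempty_Icc.mpr (Nat.le_sub_one_of_lt hn))
      (fun b => 1 - (b : ℚ) / (n : ℚ) * Fq m b
        - ((n - b : ℕ) : ℚ) / (n : ℚ) * Fq m (n - b)) := by
  have hmn : (0:ℚ) < (m:ℚ) * n := by positivity
  apply le_antisymm
  · obtain ⟨b₀, h1, h2, heq⟩ := core_ex n m hn hm
    have hmem : b₀ ∈ Finset.Icc 1 (n-1) := Finset.mem_Icc.mpr ⟨h1, h2⟩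
    refine le_trans ?_ (Finset.le_sup' _ hmem)
    rw [bridge n m b₀ hn hm h1 h2, heq, Fq_target n m hn hm]
  · apply Finset.sup'_le
    intro b hb
    rw [Finset.mem_Icc] at hb
    rw [bridge n m b hn hm hb.1 hb.2, Fq_target n m hn hm]
    have hub := core_ub n m b hn hm hb.1 hb.2
    have := (div_le_div_iff_of_pos_right hmn).mpr hub
    linarith

lemma Fq_one_left (m : ℕ) (hm : 2 ≤ m) : Fq 1 m = 1 := by
  unfold Fq; rw [if_pos (le_refl 1)]

lemma Fq_one_right (m : ℕ) (hm : 2 ≤ m) : Fq m 1 = 0 := by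
  unfold Fq; rw [if_neg (show ¬ m ≤ 1 by omega), if_pos (le_refl 1)]

section Main

variable (p : ℕ → ℕ → ℚ)
    (hp1 : ∀ m : ℕ, 2 ≤ m → p 1 m = 1)
    (hp2 : ∀ n : ℕ, 2 ≤ n → p n 1 = 0)
    (hrec : ∀ n m : ℕ, ∀ hn : 2 ≤ n, 2 ≤ m →
      p n m = (Finset.Icc 1 (n - 1)).sup' (Finset.nonempty_Icc.mpr (Nat.le_sub_one_of_lt hn))
        (fun b => 1 - (b : ℚ) / (n : ℚ) * p m b
          - ((n - b : ℕ) : ℚ) / (n : ℚ) * p m (n - b)))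

include hp1 hp2 hrec in
lemma p_eq_Fq : ∀ n m : ℕ, 1 ≤ n → 2 ≤ m → p n m = Fq n m := by
  have key : ∀ s n m : ℕ, n + m ≤ s → 1 ≤ n → 2 ≤ m → p n m = Fq n m := by
    intro s
    induction s with
    | zero => intro n m h h1 h2; omega
    | succ s ih =>
      intro n m hle h1 h2
      rcases eq_or_lt_of_le h1 with e | hn2
      · rw [← e, hp1 m h2, Fq_one_left m h2]
      · have hn : 2 ≤ n := hn2
        rw [hrec n m hn h2]
        have hcong : ∀ x ∈ Finset.Icc 1 (n-1),
            (1 - (x:ℚ)/(n:ℚ) * p m x - ((n - x : ℕ):ℚ)/(n:ℚ) * p m (n-x))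
            = (1 - (x:ℚ)/(n:ℚ) * Fq m x - ((n - x : ℕ):ℚ)/(n:ℚ) * Fq m (n-x)) := by
          intro x hx
          rw [Finset.mem_Icc] at hx
          have e1 : p m x = Fq m x := by
            rcases eq_or_lt_of_le hx.1 with ex | ex
            · rw [← ex, hp2 m h2, Fq_one_right m h2]
            · exact ih m x (by omega) (by omega) ex
          have e2 : p m (n - x) = Fq m (n - x) := by
            rcases (by omega : 1 = n - x ∨ 2 ≤ n - x) with ex | ex
            · rw [← ex, hp2 m h2, Fq_one_right m h2]
            · exact ih m (n - x) (by omega) (by omega) ex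
          rw [e1, e2]
        rw [Finset.sup'_congr _ rfl hcong]
        exact (Fq_rec n m hn h2).symm
  intro n m h1 h2
  exact key (n + m) n m le_rfl h1 h2

include hp1 hp2 hrec in
lemma p_diag (n : ℕ) (hn : 2 ≤ n) :
    p n n = 1 - Cq n / (n * n) := by
  rw [p_eq_Fq p hp1 hp2 hrec n n (by omega) hn]
  unfold Fq
  rw [if_neg (show ¬ n ≤ 1 by omega), if_neg (show ¬ n ≤ 1 by omega),
    if_neg (show ¬ n ≤ 2 ^ Kf n by have := Kf_lt n hn; omega)]

end Main

lemma Kf_pow (k : ℕ) : Kf (2 ^ (k + 1)) = k := by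
  unfold Kf
  apply Nat.log_eq_of_pow_le_of_lt_pow
  · have h2 : (2:ℕ) ^ (k+1) = 2 * 2 ^ k := by ring
    have h1 : 1 ≤ (2:ℕ) ^ k := Nat.one_le_two_pow
    omega
  · have h1 : 1 ≤ (2:ℕ) ^ (k+1) := Nat.one_le_two_pow
    omega

lemma val1 (k : ℕ) :
    (1 : ℚ) - Cq (2 ^ (k+1)) / (((2 ^ (k+1) : ℕ) : ℚ) * ((2 ^ (k+1) : ℕ) : ℚ))
      = 2/3 + 1/3 * (1/4) ^ k := by
  rw [Cq_def', Kf_pow]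
  have hc : ((2 ^ (k+1) : ℕ) : ℚ) = 2 * 2 ^ k := by push_cast [pow_succ]; ring
  rw [hc, show ((1:ℚ)/4)^k = 1/(2^k*2^k) by rw [div_pow, one_pow, four_pow]]
  have h0 : ((2:ℚ) ^ k) ≠ 0 := by positivity
  field_simp
  ring

-- the ceiling subsequence
lemma ceil_lb (k : ℕ) : 2 ^ k < ⌈(4/3 : ℚ) * 2 ^ k⌉₊ := by
  have h1 : ((4:ℚ)/3) * 2 ^ k ≤ (⌈(4/3 : ℚ) * 2 ^ k⌉₊ : ℚ) := Nat.le_ceil _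
  have h2 : ((2:ℚ) ^ k) < (4/3) * 2 ^ k := by
    have : (0:ℚ) < 2 ^ k := by positivity
    linarith
  have : ((2 ^ k : ℕ) : ℚ) < (⌈(4/3 : ℚ) * 2 ^ k⌉₊ : ℚ) := by push_cast; linarith
  exact_mod_cast this

lemma ceil_ub (k : ℕ) : ⌈(4/3 : ℚ) * 2 ^ k⌉₊ ≤ 2 ^ (k + 1) := by
  apply Nat.ceil_le.mpr
  have : (0:ℚ) < 2 ^ k := by positivity
  push_cast [pow_succ]
  linarith

lemma Kf_ceil (k : ℕ) : Kf ⌈(4/3 : ℚ) * 2 ^ k⌉₊ = k := by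
  unfold Kf
  apply Nat.log_eq_of_pow_le_of_lt_pow
  · have := ceil_lb k; omega
  · have := ceil_ub k
    have h1 : 1 ≤ (2:ℕ) ^ (k+1) := Nat.one_le_two_pow
    have := ceil_lb k
    omega

/-- real-valued diagonal formula in terms of `v = 2^k/n` and `1/n`. -/
lemma val2 (k n : ℕ) (hK : Kf n = k) (hn : 2 ≤ n) :
    ((1 - Cq n / ((n:ℚ) * n) : ℚ) : ℝ)
      = 1 - (2:ℝ)^k/(n:ℝ) + 2/3 * ((2:ℝ)^k/(n:ℝ))^2 + 4/3 * (1/(n:ℝ))^2 := by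
  rw [Cq_def', hK]
  have h0 : ((n:ℝ)) ≠ 0 := by positivity
  push_cast
  field_simp
  ring

lemma tendsto_lim1 :
    Tendsto (fun k : ℕ => (2/3 + 1/3 * (1/4:ℝ) ^ k)) atTop (nhds (2/3)) := by
  have h := (tendsto_pow_atTop_nhds_zero_of_lt_one
    (by norm_num : (0:ℝ) ≤ 1/4) (by norm_num : (1/4:ℝ) < 1)).const_mul (1/3 : ℝ)
  have h2 := (tendsto_const_nhds : Tendsto (fun _ : ℕ => (2/3:ℝ)) atTop (nhds (2/3))).add h
  simpa using h2

lemma my_tendsto_ceil_atTop :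
    Tendsto (fun k : ℕ => ((⌈(4/3 : ℚ) * 2 ^ k⌉₊ : ℕ) : ℝ)) atTop atTop := by
  apply tendsto_atTop_mono (f := fun k : ℕ => ((2:ℝ)^k))
  · intro k
    have := ceil_lb k
    have : (2^k : ℕ) ≤ ⌈(4/3 : ℚ) * 2 ^ k⌉₊ := by omega
    calc ((2:ℝ)^k) = ((2^k : ℕ) : ℝ) := by push_cast; ring
    _ ≤ _ := by exact_mod_cast this
  · exact tendsto_pow_atTop_atTop_of_one_lt (by norm_num)

lemma tendsto_v :
    Tendsto (fun k : ℕ => (2:ℝ)^k / ((⌈(4/3 : ℚ) * 2 ^ k⌉₊ : ℕ) : ℝ))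
      atTop (nhds (3/4)) := by
  have hu : Tendsto (fun k : ℕ => ((⌈(4/3 : ℚ) * 2 ^ k⌉₊ : ℕ) : ℝ) / (2:ℝ)^k)
      atTop (nhds (4/3)) := by
    apply tendsto_of_tendsto_of_tendsto_of_le_of_le
      (g := fun _ : ℕ => (4/3 : ℝ)) (h := fun k : ℕ => (4/3 : ℝ) + (1/2)^k)
    · exact tendsto_const_nhds
    · have h := (tendsto_pow_atTop_nhds_zero_of_lt_one
        (by norm_num : (0:ℝ) ≤ 1/2) (by norm_num : (1/2:ℝ) < 1))
      have h2 := (tendsto_const_nhds : Tendsto (fun _ : ℕ => (4/3:ℝ)) atTop (nhds (4/3))).add h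
      simpa using h2
    · intro k
      have h1 : ((4:ℚ)/3) * 2 ^ k ≤ (⌈(4/3 : ℚ) * 2 ^ k⌉₊ : ℚ) := Nat.le_ceil _
      have h1' : ((4:ℝ)/3) * 2 ^ k ≤ ((⌈(4/3 : ℚ) * 2 ^ k⌉₊ : ℕ) : ℝ) := by
        have h2 := (Rat.cast_le (K := ℝ)).mpr h1
        push_cast at h2 ⊢
        convert h2 using 2 <;> norm_num
      have hp : (0:ℝ) < 2 ^ k := by positivity
      rw [le_div_iff₀ hp]
      linarith
    · intro k
      have h1 : (⌈(4/3 : ℚ) * 2 ^ k⌉₊ : ℚ) < (4/3) * 2 ^ k + 1 :=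
        Nat.ceil_lt_add_one (by positivity)
      have h1' : ((⌈(4/3 : ℚ) * 2 ^ k⌉₊ : ℕ) : ℝ) < (4/3) * 2 ^ k + 1 := by
        have h2 := (Rat.cast_lt (K := ℝ)).mpr h1
        push_cast at h2 ⊢
        convert h2 using 2 <;> norm_num
      have hp : (0:ℝ) < 2 ^ k := by positivity
      rw [div_le_iff₀ hp]
      have hk : (1:ℝ) = (1/2)^k * 2^k := by
        rw [div_pow, one_pow, div_mul_cancel₀]
        positivity
      nlinarith
  have hne : (4/3 : ℝ) ≠ 0 := by norm_num
  have := hu.inv₀ hne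
  have heq : ∀ k : ℕ, (((⌈(4/3 : ℚ) * 2 ^ k⌉₊ : ℕ) : ℝ) / (2:ℝ)^k)⁻¹
      = (2:ℝ)^k / ((⌈(4/3 : ℚ) * 2 ^ k⌉₊ : ℕ) : ℝ) := fun k => by
    rw [inv_div]
  rw [show ((4/3 : ℝ))⁻¹ = 3/4 by norm_num] at this
  simpa [heq] using this

/-- Log-periodicity of "Guess Who?": the sequence `n ↦ p n n` (as real numbers) does
not converge. Along `n = 2^(k+1)` it tends to `2/3`, along `n = ⌈(4/3)·2^k⌉` it tends
to `5/8`, hence there is no limit `L`. -/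
theorem guess_who_diagonal_not_convergent
    (p : ℕ → ℕ → ℚ)
    (hp1 : ∀ m : ℕ, 2 ≤ m → p 1 m = 1)
    (hp2 : ∀ n : ℕ, 2 ≤ n → p n 1 = 0)
    (hrec : ∀ n m : ℕ, ∀ hn : 2 ≤ n, 2 ≤ m →
      p n m = (Finset.Icc 1 (n - 1)).sup' (Finset.nonempty_Icc.mpr (by omega))
        (fun b => 1 - (b : ℚ) / (n : ℚ) * p m b
          - ((n - b : ℕ) : ℚ) / (n : ℚ) * p m (n - b))) :
    Tendsto (fun k : ℕ => (p (2 ^ (k + 1)) (2 ^ (k + 1)) : ℝ)) atTop (nhds (2 / 3)) ∧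
    Tendsto (fun k : ℕ =>
      (p ⌈(4 / 3 : ℚ) * 2 ^ k⌉₊ ⌈(4 / 3 : ℚ) * 2 ^ k⌉₊ : ℝ)) atTop (nhds (5 / 8)) ∧
    ¬ ∃ L : ℝ, Tendsto (fun n : ℕ => (p n n : ℝ)) atTop (nhds L) := by
  have hdiag := p_diag p hp1 hp2 hrec
  have part1 : Tendsto (fun k : ℕ => (p (2 ^ (k + 1)) (2 ^ (k + 1)) : ℝ))
      atTop (nhds (2 / 3)) := by
    apply tendsto_lim1.congr
    intro k
    have h2 : 2 ≤ 2 ^ (k+1) := by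
      have : (2:ℕ)^1 ≤ 2^(k+1) := Nat.pow_le_pow_right (by norm_num) (by omega)
      simpa using this
    rw [hdiag (2^(k+1)) h2, val1 k]
    push_cast
    ring
  have hn2 : ∀ k : ℕ, 2 ≤ ⌈(4 / 3 : ℚ) * 2 ^ k⌉₊ := by
    intro k
    have h1 := ceil_lb k
    have : 1 ≤ (2:ℕ)^k := Nat.one_le_two_pow
    omega
  have part2 : Tendsto (fun k : ℕ =>
      (p ⌈(4 / 3 : ℚ) * 2 ^ k⌉₊ ⌈(4 / 3 : ℚ) * 2 ^ k⌉₊ : ℝ)) atTop (nhds (5 / 8)) := by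
    set q : ℕ → ℕ := fun k => ⌈(4 / 3 : ℚ) * 2 ^ k⌉₊ with hq
    have hv := tendsto_v
    have hw : Tendsto (fun k : ℕ => 1 / ((q k : ℕ) : ℝ)) atTop (nhds 0) := by
      have := my_tendsto_ceil_atTop.inv_tendsto_atTop
      simp only [one_div, hq]; exact this
    have hcomb : Tendsto (fun k : ℕ =>
        1 - (2:ℝ)^k/((q k : ℕ):ℝ) + 2/3 * ((2:ℝ)^k/((q k : ℕ):ℝ))^2
          + 4/3 * (1/((q k : ℕ):ℝ))^2) atTop
        (nhds (1 - 3/4 + 2/3 * ((3:ℝ)/4)^2 + 4/3 * (0:ℝ)^2)) := by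
      exact ((tendsto_const_nhds.sub hv).add ((hv.pow 2).const_mul (2/3))).add
        ((hw.pow 2).const_mul (4/3))
    rw [show (5/8 : ℝ) = 1 - 3/4 + 2/3 * ((3:ℝ)/4)^2 + 4/3 * (0:ℝ)^2 by norm_num]
    apply hcomb.congr
    intro k
    rw [hdiag (q k) (hn2 k)]
    exact (val2 k (q k) (Kf_ceil k) (hn2 k)).symm
  refine ⟨part1, part2, ?_⟩
  rintro ⟨L, hL⟩
  have hs1 : Tendsto (fun k : ℕ => 2 ^ (k+1)) atTop atTop := by
    apply tendsto_atTop_mono (f := fun k : ℕ => k) ?_ tendsto_id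
    intro k
    show k ≤ 2 ^ (k+1)
    have h1 := Nat.lt_two_pow_self (n := k)
    have h2 : (2:ℕ)^k ≤ 2^(k+1) := Nat.pow_le_pow_right (by norm_num) (by omega)
    omega
  have hs2 : Tendsto (fun k : ℕ => ⌈(4 / 3 : ℚ) * 2 ^ k⌉₊) atTop atTop := by
    apply tendsto_atTop_mono (f := fun k : ℕ => k) ?_ tendsto_id
    intro k
    show k ≤ ⌈(4 / 3 : ℚ) * 2 ^ k⌉₊
    have h1 := Nat.lt_two_pow_self (n := k)
    have h2 := ceil_lb k
    omega
  have e1 : L = 2/3 := tendsto_nhds_unique (hL.comp hs1) part1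
  have e2 : L = 5/8 := tendsto_nhds_unique (hL.comp hs2) part2
  rw [e1] at e2
  norm_num at e2
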